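/- Let p be a prime and r an integer with 1 ≤ r < p such that r does not divide p − 1. Then there exists an irreducible polynomial h ∈ (ℤ/pℤ)[X] of degree at least 2 such that h divides X^r − 1 but h does not divide X^{r′} − 1 for any r′ with 0 < r′ < r. -/

import Mathlib

open Polynomial in
theorem exists_irreducible_factor (p r : ℕ) (hp : p.Prime) (hr : 1 ≤ r) (hrp : r < p)
    (hnd : ¬ r ∣ p - 1) :
    ∃ h : (ZMod p)[X], Irreducible h ∧ 2 ≤ h.natDegree ∧ h ∣ X ^ r - 1 ∧
      ∀ r' : ℕ, 0 < r' → r' < r → ¬ h ∣ X ^ r' - 1 := by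
  haveI : Fact p.Prime := ⟨hp⟩
  -- r not divisible by p in ZMod p
  have hrne : (r : ZMod p) ≠ 0 := by
    rw [Ne, ZMod.natCast_eq_zero_iff]
    exact fun hd => absurd (Nat.le_of_dvd (by omega) hd) (by omega)
  haveI : NeZero ((r : ℕ) : ZMod p) := ⟨hrne⟩
  -- choose an irreducible factor h of the cyclotomic polynomial
  have hcne : cyclotomic r (ZMod p) ≠ 0 := cyclotomic_ne_zero r _
  have hcdeg : 0 < (cyclotomic r (ZMod p)).natDegree := by
    rw [natDegree_cyclotomic]
    exact Nat.totient_pos.2 (by omega)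
  obtain ⟨h, hirr, hdvd⟩ := WfDvdMonoid.exists_irreducible_factor
    (Polynomial.not_isUnit_of_natDegree_pos _ hcdeg) hcne
  haveI : Fact (Irreducible h) := ⟨hirr⟩
  refine ⟨h, hirr, ?_, hdvd.trans (cyclotomic.dvd_X_pow_sub_one r _), ?_⟩
  · -- degree at least 2
    by_contra hlt
    push_neg at hlt
    have hdeg1 : h.degree = 1 := by
      have h0 : h.natDegree ≠ 0 := hirr.natDegree_pos.ne'
      have : h.natDegree = 1 := by omega
      rw [degree_eq_natDegree hirr.ne_zero, this, Nat.cast_one]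
    obtain ⟨a, ha⟩ := Polynomial.exists_root_of_degree_eq_one hdeg1
    have hacyc : IsRoot (cyclotomic r (ZMod p)) a := by
      obtain ⟨g, hg⟩ := hdvd
      rw [hg]
      show eval a (h * g) = 0
      rw [eval_mul, ha.eq_zero, zero_mul]
    have hprim : IsPrimitiveRoot a r := (isRoot_cyclotomic_iff).1 hacyc
    have hu : IsUnit a := hprim.isUnit (by omega)
    have hpru : IsPrimitiveRoot hu.unit r := hprim.isUnit_unit (by omega)
    have : orderOf hu.unit = r := hpru.eq_orderOf.symm
    have hdvd' : r ∣ Fintype.card (ZMod p)ˣ := this ▸ orderOf_dvd_card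
    rw [ZMod.card_units] at hdvd'
    exact hnd hdvd'
  · -- does not divide X^r' - 1 for 0 < r' < r
    intro r' hr'0 hr'r hdvd'
    -- work in AdjoinRoot h
    have hz : IsRoot (cyclotomic r (AdjoinRoot h)) (AdjoinRoot.root h) := by
      have : (aeval (AdjoinRoot.root h)) (cyclotomic r (ZMod p)) = 0 := by
        rw [AdjoinRoot.aeval_eq, AdjoinRoot.mk_eq_zero.2 hdvd]
      rwa [← map_cyclotomic r (algebraMap (ZMod p) (AdjoinRoot h)),
        IsRoot, eval_map, ← aeval_def]
    haveI : NeZero ((r : ℕ) : AdjoinRoot h) := by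
      refine ⟨fun hc => hrne ?_⟩
      have := (algebraMap (ZMod p) (AdjoinRoot h)).injective
      apply this
      rwa [map_natCast, map_zero]
    have hprim : IsPrimitiveRoot (AdjoinRoot.root h) r := (isRoot_cyclotomic_iff).1 hz
    have hzr' : (AdjoinRoot.root h) ^ r' = 1 := by
      have : (aeval (AdjoinRoot.root h)) ((X : (ZMod p)[X]) ^ r' - 1) = 0 := by
        rw [AdjoinRoot.aeval_eq, AdjoinRoot.mk_eq_zero.2 hdvd']
      have h2 : (AdjoinRoot.root h) ^ r' - 1 = 0 := by simpa using this
      linear_combination h2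
    exact hprim.pow_ne_one_of_pos_of_lt hr'0.ne' hr'r hzr'
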